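/- In model M2: X_n = σ_n ε_n with σ_{n+1}² = f(ε_n², σ_n²), f increasing and componentwise convex, and independent innovations, if ε_k² ≤_st ε̃_k² for each k then X_n² ≤_st X̃_n², and if ε_k² ≤_icx ε̃_k² for each k then X_n² ≤_icx X̃_n². -/

import Mathlib

open MeasureTheory ProbabilityTheory Set
open scoped ENNReal

/-- Usual stochastic order. -/
def LeSt {Ω : Type*} [MeasurableSpace Ω] (μ : Measure Ω) (X Y : Ω → ℝ) : Prop :=
  ∀ φ : ℝ → ℝ, Monotone φ → Integrable (φ ∘ X) μ → Integrable (φ ∘ Y) μ →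
    ∫ ω, φ (X ω) ∂μ ≤ ∫ ω, φ (Y ω) ∂μ

/-- Increasing convex order. -/
def LeIcx {Ω : Type*} [MeasurableSpace Ω] (μ : Measure Ω) (X Y : Ω → ℝ) : Prop :=
  ∀ φ : ℝ → ℝ, Monotone φ → ConvexOn ℝ Set.univ φ →
    Integrable (φ ∘ X) μ → Integrable (φ ∘ Y) μ →
    ∫ ω, φ (X ω) ∂μ ≤ ∫ ω, φ (Y ω) ∂μ

noncomputable section

namespace Stmt3Aux

lemma iSup_inf_nat (a : ℝ≥0∞) : (⨆ N : ℕ, a ⊓ (N : ℝ≥0∞)) = a := by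
  apply le_antisymm (iSup_le fun _ => inf_le_left)
  rcases eq_or_ne a ⊤ with ha | ha
  · subst ha
    simp only [top_inf_eq]
    rw [ENNReal.iSup_natCast]
  · obtain ⟨N, hN⟩ := ENNReal.exists_nat_gt ha
    exact le_trans (le_of_eq (inf_eq_left.mpr hN.le).symm) (le_iSup (fun N : ℕ => a ⊓ N) N)

lemma mono_posext {k : ℝ → ℝ} (hm : MonotoneOn k (Ici 0)) :
    Monotone fun x : ℝ => k (max x 0) := fun a b hab =>
  hm (le_max_right a 0) (le_max_right b 0) (max_le_max hab le_rfl)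

lemma cx_posext {k : ℝ → ℝ} (hm : MonotoneOn k (Ici 0)) (hc : ConvexOn ℝ (Ici 0) k) :
    ConvexOn ℝ univ (fun x => k (max x 0)) := by
  refine ⟨convex_univ, fun x _ y _ a b ha hb hab => ?_⟩
  simp only [smul_eq_mul]
  have h1 : max (a * x + b * y) 0 ≤ a * max x 0 + b * max y 0 := by
    apply max_le
    · have := add_le_add (mul_le_mul_of_nonneg_left (le_max_left x 0) ha)
        (mul_le_mul_of_nonneg_left (le_max_left y 0) hb)
      linarith
    · positivity
  have hmem1 : a * max x 0 + b * max y 0 ∈ Ici (0:ℝ) := by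
    have : (0:ℝ) ≤ a * max x 0 + b * max y 0 := by positivity
    exact this
  calc k (max (a * x + b * y) 0) ≤ k (a * max x 0 + b * max y 0) :=
        hm (le_max_right (a * x + b * y) 0) hmem1 h1
    _ ≤ a * k (max x 0) + b * k (max y 0) := by
        have := hc.2 (le_max_right x 0) (le_max_right y 0) ha hb hab
        simpa using this
    _ = a • k (max x 0) + b • k (max y 0) := by simp

lemma cx_comp_mono {ψ k : ℝ → ℝ} (hψm : Monotone ψ) (hψc : ConvexOn ℝ univ ψ)
    (hkc : ConvexOn ℝ univ k) : ConvexOn ℝ univ fun x => ψ (k x) := by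
  refine ⟨convex_univ, fun x _ y _ a b ha hb hab => ?_⟩
  calc ψ (k (a • x + b • y)) ≤ ψ (a • k x + b • k y) :=
        hψm (hkc.2 trivial trivial ha hb hab)
    _ ≤ a • ψ (k x) + b • ψ (k y) := hψc.2 trivial trivial ha hb hab

section Orders

variable {Ω : Type*} [MeasurableSpace Ω] (μ : Measure Ω)

/-- strong stochastic order via `ℝ≥0∞`-valued monotone test functions -/
def StSt (X Y : Ω → ℝ) : Prop :=
  ∀ ψ : ℝ → ℝ≥0∞, Monotone ψ → ∫⁻ ω, ψ (X ω) ∂μ ≤ ∫⁻ ω, ψ (Y ω) ∂μ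

/-- strong increasing convex order via nonnegative monotone convex test functions -/
def StrongIcx (X Y : Ω → ℝ) : Prop :=
  ∀ ψ : ℝ → ℝ, Monotone ψ → ConvexOn ℝ univ ψ → (∀ x, 0 ≤ ψ x) →
    ∫⁻ ω, ENNReal.ofReal (ψ (X ω)) ∂μ ≤ ∫⁻ ω, ENNReal.ofReal (ψ (Y ω)) ∂μ

/-- dichotomy invariant for the increasing convex order -/
def Good (X Y : Ω → ℝ) : Prop :=
  (∫⁻ ω, ENNReal.ofReal (X ω) ∂μ = ⊤) ∨ StrongIcx μ X Y

variable {μ} [IsProbabilityMeasure μ]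

lemma stSt_of_leSt {X Y : Ω → ℝ} (hX : Measurable X) (hY : Measurable Y)
    (h : LeSt μ X Y) : StSt μ X Y := by
  intro ψ hψ
  have hψmeas : Measurable ψ := hψ.measurable
  have key : ∀ N : ℕ, ∫⁻ ω, ψ (X ω) ⊓ N ∂μ ≤ ∫⁻ ω, ψ (Y ω) ⊓ N ∂μ := by
    intro N
    set g : ℝ → ℝ := fun x => (ψ x ⊓ N).toReal with hgdef
    have hne : ∀ x, ψ x ⊓ (N : ℝ≥0∞) ≠ ⊤ :=
      fun x => ne_top_of_le_ne_top (ENNReal.natCast_ne_top N) inf_le_right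
    have hgm : Monotone g := fun a b hab =>
      ENNReal.toReal_mono (hne b) (inf_le_inf (hψ hab) le_rfl)
    have hgb : ∀ x, |g x| ≤ (N : ℝ) := by
      intro x
      rw [abs_of_nonneg ENNReal.toReal_nonneg]
      calc (ψ x ⊓ N).toReal ≤ ((N : ℝ≥0∞)).toReal :=
            ENNReal.toReal_mono (ENNReal.natCast_ne_top N) inf_le_right
        _ = (N : ℝ) := by simp
    have hint : ∀ {Z : Ω → ℝ}, Measurable Z → Integrable (g ∘ Z) μ := by
      intro Z hZ
      refine (integrable_const (N : ℝ)).mono'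
        ((hgm.measurable.comp hZ).aestronglyMeasurable) (ae_of_all _ fun ω => ?_)
      simpa using hgb (Z ω)
    have hIX := hint hX
    have hIY := hint hY
    have hcmp := h g hgm hIX hIY
    have hconv : ∀ {Z : Ω → ℝ}, Measurable Z → Integrable (g ∘ Z) μ →
        ∫⁻ ω, ψ (Z ω) ⊓ N ∂μ = ENNReal.ofReal (∫ ω, g (Z ω) ∂μ) := by
      intro Z hZ hVZ
      have h0 : ∫ ω, g (Z ω) ∂μ = ∫ ω, (g ∘ Z) ω ∂μ := rfl
      rw [h0, ofReal_integral_eq_lintegral_ofReal hVZ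
        (ae_of_all _ fun ω => ENNReal.toReal_nonneg)]
      apply lintegral_congr
      intro ω
      exact (ENNReal.ofReal_toReal (hne (Z ω))).symm
    rw [hconv hX hIX, hconv hY hIY]
    exact ENNReal.ofReal_le_ofReal hcmp
  have hmct : ∀ {Z : Ω → ℝ}, Measurable Z →
      ∫⁻ ω, ψ (Z ω) ∂μ = ⨆ N : ℕ, ∫⁻ ω, ψ (Z ω) ⊓ N ∂μ := by
    intro Z hZ
    calc ∫⁻ ω, ψ (Z ω) ∂μ = ∫⁻ ω, ⨆ N : ℕ, (ψ (Z ω) ⊓ (N : ℝ≥0∞)) ∂μ :=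
          lintegral_congr fun ω => (iSup_inf_nat _).symm
      _ = ⨆ N : ℕ, ∫⁻ ω, ψ (Z ω) ⊓ (N : ℝ≥0∞) ∂μ :=
          lintegral_iSup (fun N => (hψmeas.comp hZ).inf measurable_const)
            (fun N M hNM ω => inf_le_inf le_rfl (by exact_mod_cast Nat.cast_le.mpr hNM))
  rw [hmct hX, hmct hY]
  exact iSup_mono key

end Orders


section Approx

variable {ψ : ℝ → ℝ} (hm : Monotone ψ) (hc : ConvexOn ℝ univ ψ)

/-- slope set at a rational point -/
private def SlopeSet (ψ : ℝ → ℝ) (r : ℚ) : Set ℝ :=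
  (fun q : ℚ => (ψ q - ψ r) / ((q : ℝ) - r)) '' {q : ℚ | r < q}

private noncomputable def dslope (ψ : ℝ → ℝ) (r : ℚ) : ℝ := sInf (SlopeSet ψ r)

lemma slopeSet_nonempty (r : ℚ) : (SlopeSet ψ r).Nonempty :=
  ⟨_, ⟨r + 1, by simp, rfl⟩⟩

include hm in
lemma slopeSet_nonneg (r : ℚ) : ∀ y ∈ SlopeSet ψ r, 0 ≤ y := by
  rintro y ⟨q, hq, rfl⟩
  have hq' : (r : ℝ) < q := by exact_mod_cast hq
  exact div_nonneg (sub_nonneg.mpr (hm hq'.le)) (sub_nonneg.mpr hq'.le)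

include hm in
lemma dslope_nonneg (r : ℚ) : 0 ≤ dslope ψ r :=
  le_csInf (slopeSet_nonempty r) (slopeSet_nonneg hm r)

include hm in
lemma dslope_le (r q : ℚ) (h : r < q) :
    dslope ψ r ≤ (ψ q - ψ r) / ((q : ℝ) - r) :=
  csInf_le ⟨0, slopeSet_nonneg hm r⟩ ⟨q, h, rfl⟩

include hm hc in
lemma dslope_support (r : ℚ) (x : ℝ) : ψ r + dslope ψ r * (x - r) ≤ ψ x := by
  rcases lt_trichotomy x (r : ℝ) with hx | hx | hx
  · have hlb : ∀ y ∈ SlopeSet ψ r, (ψ x - ψ r) / (x - r) ≤ y := by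
      rintro y ⟨q, hq, rfl⟩
      have hq' : (r : ℝ) < q := by exact_mod_cast hq
      exact hc.secant_mono trivial trivial trivial hx.ne hq'.ne' (hx.le.trans hq'.le)
    have h1 : (ψ x - ψ r) / (x - r) ≤ dslope ψ r := le_csInf (slopeSet_nonempty r) hlb
    have h2 : dslope ψ r * (x - r) ≤ (ψ x - ψ r) / (x - r) * (x - r) :=
      mul_le_mul_of_nonpos_right h1 (by linarith)
    rw [div_mul_cancel₀ _ (by linarith : x - (r : ℝ) ≠ 0)] at h2
    linarith
  · rw [← hx]; simp
  · obtain ⟨q, hq1, hq2⟩ := exists_rat_btwn hx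
    have hq1' : r < q := by exact_mod_cast hq1
    have h1 : dslope ψ r ≤ (ψ q - ψ r) / ((q : ℝ) - r) := dslope_le hm r q hq1'
    have h2 : (ψ q - ψ r) / ((q : ℝ) - r) ≤ (ψ x - ψ r) / (x - r) :=
      hc.secant_mono trivial trivial trivial hq1.ne' hx.ne' hq2.le
    have h3 : dslope ψ r * (x - r) ≤ (ψ x - ψ r) / (x - r) * (x - r) :=
      mul_le_mul_of_nonneg_right (h1.trans h2) (by linarith)
    rw [div_mul_cancel₀ _ (by linarith : x - (r : ℝ) ≠ 0)] at h3
    linarith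

include hm hc in
lemma dslope_approx (x c : ℝ) (hcx : c < ψ x) :
    ∃ r : ℚ, c < ψ r + dslope ψ r * (x - r) := by
  obtain ⟨u, hu1, hu2⟩ := exists_rat_btwn (lt_add_one x)
  obtain ⟨w, hw⟩ := exists_rat_btwn (lt_add_one (u : ℝ))
  have huw : (u : ℝ) < w := hw.1
  have huwq : u < w := by exact_mod_cast huw
  set M : ℝ := (ψ w - ψ u) / ((w : ℝ) - u) with hM
  have hM0 : 0 ≤ M := div_nonneg (sub_nonneg.mpr (hm huw.le)) (by linarith)
  set δ : ℝ := min ((ψ x - c) / (M + 1)) ((u : ℝ) - x) with hδ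
  have hδ0 : 0 < δ := lt_min (div_pos (by linarith) (by linarith)) (by linarith)
  obtain ⟨r, hr1, hr2⟩ := exists_rat_btwn (lt_add_of_pos_right x hδ0)
  have hru : (r : ℝ) < u := by
    have : δ ≤ (u : ℝ) - x := min_le_right _ _
    linarith
  have hruq : r < u := by exact_mod_cast hru
  have hrw : (r : ℝ) < w := by linarith
  have hrwq : r < w := by exact_mod_cast hrw
  -- dslope r ≤ slope r w ≤ M
  have h1 : dslope ψ r ≤ (ψ w - ψ r) / ((w : ℝ) - r) := dslope_le hm r w hrwq
  have heq : (ψ w - ψ r) / ((w : ℝ) - r) = (ψ r - ψ w) / ((r : ℝ) - w) := by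
    rw [← neg_div_neg_eq]; ring_nf
  have heq2 : M = (ψ u - ψ w) / ((u : ℝ) - w) := by
    rw [hM, ← neg_div_neg_eq]; ring_nf
  have h2 : (ψ r - ψ w) / ((r : ℝ) - w) ≤ (ψ u - ψ w) / ((u : ℝ) - w) :=
    hc.secant_mono trivial trivial trivial hrw.ne huw.ne hru.le
  have hdM : dslope ψ r ≤ M := by rw [heq2]; rw [heq] at h1; exact h1.trans h2
  refine ⟨r, ?_⟩
  have hψ : ψ x ≤ ψ r := hm hr1.le
  have hd0 : 0 ≤ dslope ψ r := dslope_nonneg hm r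
  have hbound : dslope ψ r * ((r : ℝ) - x) ≤ M * δ := by
    have h3 : dslope ψ r * ((r : ℝ) - x) ≤ M * ((r : ℝ) - x) :=
      mul_le_mul_of_nonneg_right hdM (by linarith)
    have h4 : M * ((r : ℝ) - x) ≤ M * δ := by
      apply mul_le_mul_of_nonneg_left _ hM0
      linarith
    linarith
  have hMδ : M * δ < ψ x - c := by
    have hδle : δ ≤ (ψ x - c) / (M + 1) := min_le_left _ _
    have : M * δ ≤ M * ((ψ x - c) / (M + 1)) := mul_le_mul_of_nonneg_left hδle hM0
    have h5 : M * ((ψ x - c) / (M + 1)) < (M + 1) * ((ψ x - c) / (M + 1)) := by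
      apply mul_lt_mul_of_pos_right (by linarith) (div_pos (by linarith) (by linarith))
    have h6 : (M + 1) * ((ψ x - c) / (M + 1)) = ψ x - c := by
      field_simp
    linarith
  have : ψ r + dslope ψ r * (x - r) ≥ ψ x - dslope ψ r * ((r : ℝ) - x) := by nlinarith
  linarith

end Approx


section Approx2

private def eRat : ℕ → ℚ := fun n => (Denumerable.eqv ℚ).symm n

lemma eRat_surj : Function.Surjective eRat := (Denumerable.eqv ℚ).symm.surjective

/-- supporting affine minorants, clipped at 0 -/
private noncomputable def lineG (ψ : ℝ → ℝ) (r : ℚ) : ℝ → ℝ :=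
  fun x => max (ψ r + dslope ψ r * (x - r)) 0

private noncomputable def GN (ψ : ℝ → ℝ) : ℕ → ℝ → ℝ
  | 0 => lineG ψ (eRat 0)
  | (N + 1) => fun x => max (GN ψ N x) (lineG ψ (eRat (N + 1)) x)

variable {ψ : ℝ → ℝ} (hm : Monotone ψ) (hc : ConvexOn ℝ univ ψ) (hnn : ∀ x, 0 ≤ ψ x)

include hm in
lemma lineG_mono (r : ℚ) : Monotone (lineG ψ r) := by
  intro a b hab
  have hd := dslope_nonneg hm r
  apply max_le_max _ le_rfl
  have := mul_le_mul_of_nonneg_left (by linarith : a - (r:ℝ) ≤ b - r) hd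
  linarith

lemma lineG_cx (r : ℚ) : ConvexOn ℝ univ (lineG ψ r) := by
  apply ConvexOn.sup _ (convexOn_const 0 convex_univ)
  refine ⟨convex_univ, fun x _ y _ p q hp hq hpq => le_of_eq ?_⟩
  simp only [smul_eq_mul]
  linear_combination (dslope ψ r * (r : ℝ) - ψ (r : ℝ)) * hpq

include hm hc hnn in
lemma lineG_le (r : ℚ) (x : ℝ) : lineG ψ r x ≤ ψ x :=
  max_le (dslope_support hm hc r x) (hnn x)

lemma lineG_nonneg (r : ℚ) (x : ℝ) : 0 ≤ lineG ψ r x := le_max_right _ _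

include hm in
lemma lineG_bound (r : ℚ) :
    ∀ x, lineG ψ r x ≤ (|ψ r| + dslope ψ r * |(r : ℝ)|) + dslope ψ r * |x| := by
  intro x
  have hd := dslope_nonneg hm r
  apply max_le
  · have h1 : x - (r : ℝ) ≤ |x| + |(r : ℝ)| := by
      have := le_abs_self x
      have := neg_abs_le (r : ℝ)
      linarith
    have h2 : dslope ψ r * (x - r) ≤ dslope ψ r * (|x| + |(r : ℝ)|) :=
      mul_le_mul_of_nonneg_left h1 hd
    have h3 := le_abs_self (ψ (r : ℝ))
    linarith
  · have h3 := abs_nonneg (ψ (r : ℝ))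
    have h4 : 0 ≤ dslope ψ r * |(r : ℝ)| := mul_nonneg hd (abs_nonneg _)
    have h5 : 0 ≤ dslope ψ r * |x| := mul_nonneg hd (abs_nonneg _)
    linarith

include hm in
lemma GN_mono (N : ℕ) : Monotone (GN ψ N) := by
  induction N with
  | zero => exact lineG_mono hm _
  | succ N ih => exact fun a b hab => max_le_max (ih hab) (lineG_mono hm _ hab)

lemma GN_cx (N : ℕ) : ConvexOn ℝ univ (GN ψ N) := by
  induction N with
  | zero => exact lineG_cx _
  | succ N ih => exact ih.sup (lineG_cx _)

lemma GN_nonneg (N : ℕ) (x : ℝ) : 0 ≤ GN ψ N x := by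
  induction N with
  | zero => exact lineG_nonneg _ _
  | succ N ih => exact le_trans ih (le_max_left _ _)

include hm hc hnn in
lemma GN_le (N : ℕ) (x : ℝ) : GN ψ N x ≤ ψ x := by
  induction N with
  | zero => exact lineG_le hm hc hnn _ _
  | succ N ih => exact max_le ih (lineG_le hm hc hnn _ _)

lemma GN_monoN (x : ℝ) : Monotone fun N => GN ψ N x := by
  apply monotone_nat_of_le_succ
  intro N
  exact le_max_left _ _

lemma GN_ge_line (N : ℕ) (x : ℝ) : lineG ψ (eRat N) x ≤ GN ψ N x := by
  cases N with
  | zero => exact le_rfl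
  | succ N => exact le_max_right _ _

include hm in
lemma GN_bound (N : ℕ) : ∃ C A : ℝ, 0 ≤ A ∧ ∀ x, GN ψ N x ≤ C + A * |x| := by
  induction N with
  | zero =>
      exact ⟨|ψ (eRat 0 : ℝ)| + dslope ψ (eRat 0) * |((eRat 0 : ℚ) : ℝ)|, dslope ψ (eRat 0),
        dslope_nonneg hm _, fun x => lineG_bound hm _ x⟩
  | succ N ih =>
      obtain ⟨C, A, hA, hCA⟩ := ih
      refine ⟨C + (|ψ (eRat (N+1) : ℝ)| + dslope ψ (eRat (N+1)) * |((eRat (N+1) : ℚ) : ℝ)|),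
        A + dslope ψ (eRat (N+1)),
        add_nonneg hA (dslope_nonneg hm _), fun x => ?_⟩
      have h1 : GN ψ (N+1) x ≤ GN ψ N x + lineG ψ (eRat (N+1)) x :=
        max_le (le_add_of_nonneg_right (lineG_nonneg _ _))
          (le_add_of_nonneg_left (GN_nonneg _ _))
      have h2 := hCA x
      have h3 := lineG_bound hm (eRat (N+1)) x
      have : (A + dslope ψ (eRat (N+1))) * |x| = A * |x| + dslope ψ (eRat (N+1)) * |x| := by ring
      linarith

end Approx2


section Approx3

variable {ψ : ℝ → ℝ} (hm : Monotone ψ) (hc : ConvexOn ℝ univ ψ) (hnn : ∀ x, 0 ≤ ψ x)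

include hm hc hnn in
lemma GN_sup (x : ℝ) : (⨆ N, ENNReal.ofReal (GN ψ N x)) = ENNReal.ofReal (ψ x) := by
  apply le_antisymm
  · exact iSup_le fun N => ENNReal.ofReal_le_ofReal (GN_le hm hc hnn N x)
  · apply le_of_forall_lt
    intro c hcx
    have hcne : c ≠ ⊤ := hcx.ne_top
    have hct : c.toReal < ψ x := by
      rw [← ENNReal.ofReal_toReal hcne] at hcx
      exact (ENNReal.ofReal_lt_ofReal_iff_of_nonneg ENNReal.toReal_nonneg).mp hcx
    obtain ⟨r, hr⟩ := dslope_approx hm hc x c.toReal hct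
    obtain ⟨N, hN⟩ := eRat_surj r
    have h1 : c.toReal < GN ψ N x := by
      have h2 : ψ (r : ℝ) + dslope ψ r * (x - r) ≤ lineG ψ r x := le_max_left _ _
      rw [← hN] at hr h2
      exact lt_of_lt_of_le hr (h2.trans (GN_ge_line N x))
    calc c = ENNReal.ofReal c.toReal := (ENNReal.ofReal_toReal hcne).symm
      _ < ENNReal.ofReal (GN ψ N x) := by
          rw [ENNReal.ofReal_lt_ofReal_iff (lt_of_le_of_lt ENNReal.toReal_nonneg h1)]
          exact h1
      _ ≤ ⨆ N, ENNReal.ofReal (GN ψ N x) := le_iSup (fun N => ENNReal.ofReal (GN ψ N x)) N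

end Approx3

section MainLemmas

variable {Ω : Type*} [MeasurableSpace Ω] {μ : Measure Ω} [IsProbabilityMeasure μ]

lemma lint_top_mono {Z : Ω → ℝ} (hZ : Measurable Z)
    (hZtop : ∫⁻ ω, ENNReal.ofReal (Z ω) ∂μ = ⊤) {k : ℝ → ℝ} {a t : ℝ} (ha : 0 < a)
    (hk : ∀ y, t ≤ y → a * y ≤ k y) : ∫⁻ ω, ENNReal.ofReal (k (Z ω)) ∂μ = ⊤ := by
  set s : Set Ω := {ω | t ≤ Z ω} with hsdef
  have hsm : MeasurableSet s := measurableSet_le measurable_const hZ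
  have hcomp : ∫⁻ ω in sᶜ, ENNReal.ofReal (Z ω) ∂μ ≤ ENNReal.ofReal (max t 0) := by
    calc ∫⁻ ω in sᶜ, ENNReal.ofReal (Z ω) ∂μ
        ≤ ∫⁻ _ in sᶜ, ENNReal.ofReal (max t 0) ∂μ := by
          apply lintegral_mono_ae
          filter_upwards [ae_restrict_mem hsm.compl] with ω hω
          apply ENNReal.ofReal_le_ofReal
          simp only [hsdef, mem_compl_iff, mem_setOf_eq, not_le] at hω
          exact le_max_of_le_left hω.le
      _ = ENNReal.ofReal (max t 0) * μ sᶜ := by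
          rw [setLIntegral_const]
      _ ≤ ENNReal.ofReal (max t 0) * 1 :=
          mul_le_mul_right prob_le_one _
      _ = ENNReal.ofReal (max t 0) := mul_one _
  have hstop : ∫⁻ ω in s, ENNReal.ofReal (Z ω) ∂μ = ⊤ := by
    by_contra hfin
    have hsplit := lintegral_add_compl (fun ω => ENNReal.ofReal (Z ω)) hsm (μ := μ)
    rw [hZtop] at hsplit
    exact (ENNReal.add_ne_top.mpr ⟨hfin,
      (lt_of_le_of_lt hcomp ENNReal.ofReal_lt_top).ne⟩) hsplit
  have hchain : (⊤ : ℝ≥0∞) ≤ ∫⁻ ω, ENNReal.ofReal (k (Z ω)) ∂μ := by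
    calc (⊤ : ℝ≥0∞) = ENNReal.ofReal a * ∫⁻ ω in s, ENNReal.ofReal (Z ω) ∂μ := by
          rw [hstop, ENNReal.mul_top (by simp only [ne_eq, ENNReal.ofReal_eq_zero, not_le]; exact ha)]
      _ = ∫⁻ ω in s, ENNReal.ofReal a * ENNReal.ofReal (Z ω) ∂μ :=
          (lintegral_const_mul _ (ENNReal.measurable_ofReal.comp hZ)).symm
      _ ≤ ∫⁻ ω in s, ENNReal.ofReal (k (Z ω)) ∂μ := by
          apply lintegral_mono_ae
          filter_upwards [ae_restrict_mem hsm] with ω hω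
          rw [← ENNReal.ofReal_mul ha.le]
          exact ENNReal.ofReal_le_ofReal (hk _ hω)
      _ ≤ ∫⁻ ω, ENNReal.ofReal (k (Z ω)) ∂μ := setLIntegral_le_lintegral _ _
  exact top_le_iff.mp hchain

lemma nonconst_lin {k : ℝ → ℝ} (hm : Monotone k) (hc : ConvexOn ℝ univ k) {x₀ : ℝ}
    (hx₀ : 0 ≤ x₀) (hne : k x₀ ≠ k 0) :
    ∃ a > 0, ∀ y, x₀ ≤ y → k 0 + a * y ≤ k y := by
  have hlt : k 0 < k x₀ := (hm hx₀).lt_of_ne hne.symm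
  have hx0 : 0 < x₀ := by
    rcases eq_or_lt_of_le hx₀ with h | h
    · exact absurd (congrArg k h.symm) hne
    · exact h
  refine ⟨(k x₀ - k 0) / x₀, div_pos (by linarith) hx0, fun y hy => ?_⟩
  have hax : (k x₀ - k 0) / x₀ * x₀ = k x₀ - k 0 := div_mul_cancel₀ _ hx0.ne'
  rcases eq_or_lt_of_le hy with h | h
  · rw [← h]; linarith
  · have hsl := hc.slope_mono_adjacent (mem_univ 0) (mem_univ y) hx0 h
    rw [sub_zero] at hsl
    have := (le_div_iff₀ (by linarith : (0:ℝ) < y - x₀)).mp hsl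
    have hexp : (k x₀ - k 0) / x₀ * y = (k x₀ - k 0) / x₀ * x₀ + (k x₀ - k 0) / x₀ * (y - x₀) := by
      ring
    linarith

lemma good_of_leIcx {X Y : Ω → ℝ} (hX : Measurable X) (hY : Measurable Y)
    (hXnn : ∀ ω, 0 ≤ X ω) (hYnn : ∀ ω, 0 ≤ Y ω) (h : LeIcx μ X Y) : Good μ X Y := by
  by_cases hXtop : ∫⁻ ω, ENNReal.ofReal (X ω) ∂μ = ⊤
  · exact Or.inl hXtop
  right
  intro ψ hψm hψc hψnn
  by_cases hYtop : ∫⁻ ω, ENNReal.ofReal (Y ω) ∂μ = ⊤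
  · by_cases hcst : ∀ x : ℝ, 0 ≤ x → ψ x = ψ 0
    · apply le_of_eq
      calc ∫⁻ ω, ENNReal.ofReal (ψ (X ω)) ∂μ = ∫⁻ _, ENNReal.ofReal (ψ 0) ∂μ :=
            lintegral_congr fun ω => by rw [hcst _ (hXnn ω)]
        _ = ∫⁻ ω, ENNReal.ofReal (ψ (Y ω)) ∂μ :=
            (lintegral_congr fun ω => by rw [hcst _ (hYnn ω)]).symm
    · push_neg at hcst
      obtain ⟨x₀, hx₀, hne⟩ := hcst
      obtain ⟨a, ha, hlin⟩ := nonconst_lin hψm hψc hx₀ hne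
      have : ∫⁻ ω, ENNReal.ofReal (ψ (Y ω)) ∂μ = ⊤ := by
        apply lint_top_mono hY hYtop ha
        intro y hy
        have := hlin y hy
        have := hψnn 0
        linarith
      rw [this]
      exact le_top
  · -- both finite: approximation argument
    have hXint : Integrable X μ := by
      refine ⟨hX.aestronglyMeasurable, ?_⟩
      rw [hasFiniteIntegral_iff_norm]
      have : ∀ ω, ENNReal.ofReal ‖X ω‖ = ENNReal.ofReal (X ω) := fun ω => by
        rw [Real.norm_eq_abs, abs_of_nonneg (hXnn ω)]
      rw [lintegral_congr this]
      exact Ne.lt_top hXtop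
    have hYint : Integrable Y μ := by
      refine ⟨hY.aestronglyMeasurable, ?_⟩
      rw [hasFiniteIntegral_iff_norm]
      have : ∀ ω, ENNReal.ofReal ‖Y ω‖ = ENNReal.ofReal (Y ω) := fun ω => by
        rw [Real.norm_eq_abs, abs_of_nonneg (hYnn ω)]
      rw [lintegral_congr this]
      exact Ne.lt_top hYtop
    have hGint : ∀ (N : ℕ) {Z : Ω → ℝ}, Measurable Z → (∀ ω, 0 ≤ Z ω) → Integrable Z μ →
        Integrable (GN ψ N ∘ Z) μ := by
      intro N Z hZ hZnn hZint
      obtain ⟨C, A, hA, hCA⟩ := GN_bound hψm N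
      refine (((hZint.abs.const_mul A).add (integrable_const C)).mono')
        (((GN_mono hψm N).measurable.comp hZ).aestronglyMeasurable)
        (ae_of_all _ fun ω => ?_)
      simp only [Function.comp_apply, Pi.add_apply, Real.norm_eq_abs,
        abs_of_nonneg (GN_nonneg N (Z ω))]
      calc GN ψ N (Z ω) ≤ C + A * |Z ω| := hCA (Z ω)
        _ = A * |Z ω| + C := by ring
    have hcmp : ∀ N : ℕ, ∫⁻ ω, ENNReal.ofReal (GN ψ N (X ω)) ∂μ ≤
        ∫⁻ ω, ENNReal.ofReal (GN ψ N (Y ω)) ∂μ := by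
      intro N
      have hIX := hGint N hX hXnn hXint
      have hIY := hGint N hY hYnn hYint
      have hle := h (GN ψ N) (GN_mono hψm N) (GN_cx N) hIX hIY
      have e1 : ∫⁻ ω, ENNReal.ofReal (GN ψ N (X ω)) ∂μ =
          ENNReal.ofReal (∫ ω, (GN ψ N ∘ X) ω ∂μ) :=
        (ofReal_integral_eq_lintegral_ofReal hIX
          (ae_of_all _ fun ω => GN_nonneg N (X ω))).symm
      have e2 : ∫⁻ ω, ENNReal.ofReal (GN ψ N (Y ω)) ∂μ =
          ENNReal.ofReal (∫ ω, (GN ψ N ∘ Y) ω ∂μ) :=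
        (ofReal_integral_eq_lintegral_ofReal hIY
          (ae_of_all _ fun ω => GN_nonneg N (Y ω))).symm
      rw [e1, e2]
      exact ENNReal.ofReal_le_ofReal hle
    have hmct : ∀ {Z : Ω → ℝ}, Measurable Z →
        ∫⁻ ω, ENNReal.ofReal (ψ (Z ω)) ∂μ = ⨆ N, ∫⁻ ω, ENNReal.ofReal (GN ψ N (Z ω)) ∂μ := by
      intro Z hZ
      calc ∫⁻ ω, ENNReal.ofReal (ψ (Z ω)) ∂μ
          = ∫⁻ ω, ⨆ N, ENNReal.ofReal (GN ψ N (Z ω)) ∂μ :=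
            lintegral_congr fun ω => (GN_sup hψm hψc hψnn (Z ω)).symm
        _ = ⨆ N, ∫⁻ ω, ENNReal.ofReal (GN ψ N (Z ω)) ∂μ :=
            lintegral_iSup
              (fun N => ENNReal.measurable_ofReal.comp ((GN_mono hψm N).measurable.comp hZ))
              (fun N M hNM ω => ENNReal.ofReal_le_ofReal (GN_monoN (Z ω) hNM))
    rw [hmct hX, hmct hY]
    exact iSup_mono hcmp

end MainLemmas

section Meas2

/-- dyadic upper rounding -/
private noncomputable def dyad (k : ℕ) (y : ℝ) : ℝ := (⌈y * 2 ^ k⌉₊ : ℝ) / 2 ^ k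

lemma dyad_mono (k : ℕ) : Monotone (dyad k) := by
  intro a b hab
  apply div_le_div_of_nonneg_right ?_ (by positivity)
  · exact_mod_cast Nat.ceil_le_ceil (mul_le_mul_of_nonneg_right hab (by positivity))

lemma dyad_nonneg (k : ℕ) (y : ℝ) : 0 ≤ dyad k y := by
  apply div_nonneg _ (by positivity)
  positivity

lemma dyad_countable (k : ℕ) : (range (dyad k)).Countable := by
  apply Countable.mono _ (countable_range (fun n : ℕ => (n : ℝ) / 2 ^ k))
  rintro y ⟨x, rfl⟩
  exact ⟨⌈x * 2 ^ k⌉₊, rfl⟩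

lemma dyad_ge (k : ℕ) {y : ℝ} : y ≤ dyad k y := by
  show y ≤ (⌈y * 2 ^ k⌉₊ : ℝ) / 2 ^ k
  rw [le_div_iff₀ (by positivity : (0:ℝ) < 2 ^ k)]
  exact Nat.le_ceil _

lemma dyad_le (k : ℕ) {y : ℝ} (hy : 0 ≤ y) : dyad k y ≤ y + (1 / 2) ^ k := by
  show (⌈y * 2 ^ k⌉₊ : ℝ) / 2 ^ k ≤ y + (1 / 2) ^ k
  rw [div_le_iff₀ (by positivity : (0:ℝ) < 2 ^ k)]
  have h1 : (⌈y * 2 ^ k⌉₊ : ℝ) < y * 2 ^ k + 1 := Nat.ceil_lt_add_one (by positivity)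
  have h2 : (y + (1 / 2) ^ k) * 2 ^ k = y * 2 ^ k + 1 := by
    rw [add_mul, ← mul_pow]
    norm_num
  linarith

lemma dyad_zero (k : ℕ) : dyad k 0 = 0 := by
  simp [dyad]

lemma dyad_tendsto {y : ℝ} (hy : 0 ≤ y) : Filter.Tendsto (fun k => dyad k y) Filter.atTop (nhds y) := by
  apply tendsto_of_tendsto_of_tendsto_of_le_of_le (g := fun _ => y)
    (h := fun k => y + (1 / 2) ^ k) tendsto_const_nhds
  · have h0 : Filter.Tendsto (fun k : ℕ => (1 / 2 : ℝ) ^ k) Filter.atTop (nhds 0) :=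
      tendsto_pow_atTop_nhds_zero_of_lt_one (by norm_num) (by norm_num)
    have := tendsto_const_nhds (x := y) (f := Filter.atTop (α := ℕ)) |>.add h0
    simpa using this
  · exact fun k => dyad_ge k
  · exact fun k => dyad_le k hy

lemma meas_of_countable_snd {g : ℝ → ℝ → ℝ} {d : ℝ → ℝ} (hd : Measurable d)
    (hdc : (range d).Countable) (hg : ∀ c ∈ range d, Measurable fun x => g x c) :
    Measurable fun p : ℝ × ℝ => g p.1 (d p.2) := by
  intro t ht
  have hset : (fun p : ℝ × ℝ => g p.1 (d p.2)) ⁻¹' t =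
      ⋃ c ∈ range d, ((fun p : ℝ × ℝ => d p.2) ⁻¹' {c}) ∩ {p : ℝ × ℝ | g p.1 c ∈ t} := by
    ext p
    simp only [mem_preimage, mem_iUnion, mem_inter_iff, mem_singleton_iff, mem_setOf_eq]
    constructor
    · intro hp
      exact ⟨d p.2, ⟨p.2, rfl⟩, rfl, hp⟩
    · rintro ⟨c, -, hdc', hgc⟩
      rw [← hdc'] at hgc
      exact hgc
  rw [hset]
  apply MeasurableSet.biUnion hdc
  intro c hc
  exact ((hd.comp measurable_snd) (measurableSet_singleton c)).inter
    (((hg c hc).comp measurable_fst) ht)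

lemma meas_posext2 {f : ℝ → ℝ → ℝ}
    (hf_mono : MonotoneOn (fun p : ℝ × ℝ => f p.1 p.2) (Ici 0 ×ˢ Ici 0))
    (hf_cx2 : ∀ x ∈ Ici (0:ℝ), ConvexOn ℝ (Ici (0:ℝ)) (fun y => f x y)) :
    Measurable (fun p : ℝ × ℝ => f (max p.1 0) (max p.2 0)) := by
  have hsec : ∀ c : ℝ, 0 ≤ c → Measurable fun x : ℝ => f (max x 0) c := by
    intro c hc
    have hmono : Monotone fun x : ℝ => f (max x 0) c := by
      intro a b hab
      exact hf_mono (mk_mem_prod (le_max_right a 0) hc) (mk_mem_prod (le_max_right b 0) hc)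
        ⟨max_le_max hab le_rfl, le_rfl⟩
    exact hmono.measurable
  have hFk : ∀ k : ℕ, Measurable fun p : ℝ × ℝ => f (max p.1 0) (dyad k (max p.2 0)) := by
    intro k
    have hdm : Monotone fun y : ℝ => dyad k (max y 0) :=
      (dyad_mono k).comp fun a b hab => max_le_max hab le_rfl
    have hdr : (range fun y : ℝ => dyad k (max y 0)).Countable := by
      apply Countable.mono _ (dyad_countable k)
      rintro c ⟨y, rfl⟩
      exact ⟨max y 0, rfl⟩
    apply meas_of_countable_snd (g := fun x c => f (max x 0) c) (d := fun y : ℝ => dyad k (max y 0)) hdm.measurable hdr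
    rintro c ⟨y, rfl⟩
    exact hsec _ (dyad_nonneg k _)
  apply measurable_of_tendsto_metrizable hFk
  rw [tendsto_pi_nhds]
  intro p
  rcases le_or_gt p.2 0 with hp2 | hp2
  · have hmax : max p.2 0 = 0 := max_eq_right hp2
    rw [hmax]
    simp only [dyad_zero]
    exact tendsto_const_nhds
  · have hmax : max p.2 0 = p.2 := max_eq_left hp2.le
    rw [hmax]
    -- continuity of f (max p.1 0) on Ioi 0
    have hcx : ConvexOn ℝ (Ioi (0:ℝ)) fun y => f (max p.1 0) y :=
      (hf_cx2 _ (le_max_right p.1 0)).subset Ioi_subset_Ici_self (convex_Ioi 0)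
    have hcont : ContinuousOn (fun y => f (max p.1 0) y) (Ioi 0) :=
      hcx.continuousOn isOpen_Ioi
    have hca : ContinuousAt (fun y => f (max p.1 0) y) p.2 :=
      hcont.continuousAt (Ioi_mem_nhds hp2)
    exact hca.tendsto.comp (dyad_tendsto hp2.le)

end Meas2

section Indep

variable {Ω : Type*} [MeasurableSpace Ω] {μ : Measure Ω} [IsProbabilityMeasure μ]

lemma lintegral_indep {E S : Ω → ℝ} (hEm : Measurable E) (hSm : Measurable S)
    (hI : IndepFun E S μ) {Ψ : ℝ × ℝ → ℝ≥0∞} (hΨ : Measurable Ψ) :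
    ∫⁻ ω, Ψ (E ω, S ω) ∂μ = ∫⁻ e, ∫⁻ s, Ψ (e, s) ∂(μ.map S) ∂(μ.map E) := by
  have hmap : μ.map (fun ω => (E ω, S ω)) = (μ.map E).prod (μ.map S) :=
    (indepFun_iff_map_prod_eq_prod_map_map hEm.aemeasurable hSm.aemeasurable).mp hI
  rw [← lintegral_map hΨ (hEm.prodMk hSm), hmap, lintegral_prod _ hΨ.aemeasurable]

lemma lintegral_indep' {E S : Ω → ℝ} (hEm : Measurable E) (hSm : Measurable S)
    (hI : IndepFun E S μ) {Ψ : ℝ × ℝ → ℝ≥0∞} (hΨ : Measurable Ψ) :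
    ∫⁻ ω, Ψ (E ω, S ω) ∂μ = ∫⁻ s, ∫⁻ e, Ψ (e, s) ∂(μ.map E) ∂(μ.map S) := by
  have hmap : μ.map (fun ω => (E ω, S ω)) = (μ.map E).prod (μ.map S) :=
    (indepFun_iff_map_prod_eq_prod_map_map hEm.aemeasurable hSm.aemeasurable).mp hI
  rw [← lintegral_map hΨ (hEm.prodMk hSm), hmap, lintegral_prod_symm _ hΨ.aemeasurable]

lemma map_ae_nonneg {E : Ω → ℝ} (hEm : Measurable E) (hEnn : ∀ ω, 0 ≤ E ω) :
    ∀ᵐ e ∂(μ.map E), 0 ≤ e := by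
  rw [ae_map_iff hEm.aemeasurable measurableSet_Ici]
  exact ae_of_all _ hEnn

lemma lintegral_law {E : Ω → ℝ} (hEm : Measurable E) {ψ : ℝ → ℝ≥0∞} (hψ : Measurable ψ) :
    ∫⁻ e, ψ e ∂(μ.map E) = ∫⁻ ω, ψ (E ω) ∂μ :=
  lintegral_map hψ hEm

end Indep

section Steps

variable {Ω : Type*} [MeasurableSpace Ω] {μ : Measure Ω} [IsProbabilityMeasure μ]
variable {E S E' S' : Ω → ℝ} {g : ℝ → ℝ → ℝ}

lemma stSt_step (hEm : Measurable E) (hSm : Measurable S) (hE'm : Measurable E')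
    (hS'm : Measurable S') (hI : IndepFun E S μ) (hI' : IndepFun E' S' μ)
    (hgmeas : Measurable fun p : ℝ × ℝ => g p.1 p.2)
    (hgmono : Monotone fun p : ℝ × ℝ => g p.1 p.2)
    (hstE : StSt μ E E') (hstS : StSt μ S S') :
    StSt μ (fun ω => g (E ω) (S ω)) (fun ω => g (E' ω) (S' ω)) := by
  intro ψ hψ
  have hψmeas : Measurable ψ := hψ.measurable
  have hΨ : Measurable fun p : ℝ × ℝ => ψ (g p.1 p.2) := hψmeas.comp hgmeas
  have hsec1 : ∀ s : ℝ, Monotone fun e => ψ (g e s) := fun s a b hab =>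
    hψ (hgmono (Prod.mk_le_mk.mpr ⟨hab, le_rfl⟩))
  have hsec2 : ∀ e : ℝ, Monotone fun s => ψ (g e s) := fun e a b hab =>
    hψ (hgmono (Prod.mk_le_mk.mpr ⟨le_rfl, hab⟩))
  calc ∫⁻ ω, ψ (g (E ω) (S ω)) ∂μ
      = ∫⁻ s, ∫⁻ e, ψ (g e s) ∂(μ.map E) ∂(μ.map S) := lintegral_indep' hEm hSm hI hΨ
    _ ≤ ∫⁻ s, ∫⁻ e, ψ (g e s) ∂(μ.map E') ∂(μ.map S) := by
        apply lintegral_mono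
        intro s
        show ∫⁻ e, ψ (g e s) ∂(μ.map E) ≤ ∫⁻ e, ψ (g e s) ∂(μ.map E')
        rw [lintegral_law hEm (hsec1 s).measurable, lintegral_law hE'm (hsec1 s).measurable]
        exact hstE _ (hsec1 s)
    _ = ∫⁻ e, ∫⁻ s, ψ (g e s) ∂(μ.map S) ∂(μ.map E') := by
        apply lintegral_lintegral_swap
        exact (hΨ.comp measurable_swap).aemeasurable
    _ ≤ ∫⁻ e, ∫⁻ s, ψ (g e s) ∂(μ.map S') ∂(μ.map E') := by
        apply lintegral_mono
        intro e
        show ∫⁻ s, ψ (g e s) ∂(μ.map S) ≤ ∫⁻ s, ψ (g e s) ∂(μ.map S')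
        rw [lintegral_law hSm (hsec2 e).measurable, lintegral_law hS'm (hsec2 e).measurable]
        exact hstS _ (hsec2 e)
    _ = ∫⁻ ω, ψ (g (E' ω) (S' ω)) ∂μ := (lintegral_indep hE'm hS'm hI' hΨ).symm

end Steps

section GoodStep

variable {Ω : Type*} [MeasurableSpace Ω] {μ : Measure Ω} [IsProbabilityMeasure μ]
variable {E S E' S' : Ω → ℝ} {g : ℝ → ℝ → ℝ}

lemma lin_adjust {k : ℝ → ℝ} {a x₀ : ℝ} (ha : 0 < a)
    (hk : ∀ y, x₀ ≤ y → k 0 + a * y ≤ k y) :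
    ∃ b > 0, ∃ t : ℝ, ∀ y, t ≤ y → b * y ≤ k y := by
  refine ⟨a / 2, half_pos ha, max x₀ (2 * (|k 0| + 1) / a), fun y hy => ?_⟩
  have h1 := hk y (le_trans (le_max_left _ _) hy)
  have h2 : 2 * (|k 0| + 1) / a ≤ y := le_trans (le_max_right _ _) hy
  have h3 : |k 0| + 1 ≤ a / 2 * y := by
    rw [div_mul_eq_mul_div, le_div_iff₀ (by norm_num : (0:ℝ) < 2)] at *
    calc (|k 0| + 1) * 2 = a * (2 * (|k 0| + 1) / a) := by field_simp
      _ ≤ a * y := mul_le_mul_of_nonneg_left h2 ha.le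
      _ = a * y := rfl
  have hk0 : -(k 0) ≤ |k 0| := neg_le_abs _
  nlinarith

/-- a monotone convex function which is non-constant on the rationals in `[0, ∞)` witnessed by
`q₀`, composed with a variable of infinite mean, has infinite integral -/
lemma lint_top_of_nonconst {Z : Ω → ℝ} (hZ : Measurable Z)
    (hZtop : ∫⁻ ω, ENNReal.ofReal (Z ω) ∂μ = ⊤) {k : ℝ → ℝ} (hkm : Monotone k)
    (hkc : ConvexOn ℝ univ k) {x₀ : ℝ} (hx₀ : 0 ≤ x₀) (hne : k x₀ ≠ k 0) :
    ∫⁻ ω, ENNReal.ofReal (k (Z ω)) ∂μ = ⊤ := by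
  obtain ⟨a, ha, hlin⟩ := nonconst_lin hkm hkc hx₀ hne
  obtain ⟨b, hb, t, hbt⟩ := lin_adjust ha hlin
  exact lint_top_mono hZ hZtop hb hbt

end GoodStep

section GoodStep2

variable {Ω : Type*} [MeasurableSpace Ω] {μ : Measure Ω} [IsProbabilityMeasure μ]
variable {E S E' S' : Ω → ℝ} {g : ℝ → ℝ → ℝ}

lemma good_step (hEm : Measurable E) (hSm : Measurable S) (hE'm : Measurable E')
    (hS'm : Measurable S')
    (hEnn : ∀ ω, 0 ≤ E ω) (hSnn : ∀ ω, 0 ≤ S ω) (hE'nn : ∀ ω, 0 ≤ E' ω)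
    (hS'nn : ∀ ω, 0 ≤ S' ω)
    (hI : IndepFun E S μ) (hI' : IndepFun E' S' μ)
    (hgmeas : Measurable fun p : ℝ × ℝ => g p.1 p.2)
    (hgmono : Monotone fun p : ℝ × ℝ => g p.1 p.2)
    (hgcx1 : ∀ s : ℝ, ConvexOn ℝ univ fun e => g e s)
    (hgcx2 : ∀ e : ℝ, ConvexOn ℝ univ fun s => g e s)
    (hGoodE : Good μ E E') (hGoodS : Good μ S S') :
    Good μ (fun ω => g (E ω) (S ω)) (fun ω => g (E' ω) (S' ω)) := by
  haveI hPE : IsProbabilityMeasure (μ.map E) := Measure.isProbabilityMeasure_map hEm.aemeasurable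
  haveI hPS : IsProbabilityMeasure (μ.map S) := Measure.isProbabilityMeasure_map hSm.aemeasurable
  haveI hPE' : IsProbabilityMeasure (μ.map E') := Measure.isProbabilityMeasure_map hE'm.aemeasurable
  haveI hPS' : IsProbabilityMeasure (μ.map S') := Measure.isProbabilityMeasure_map hS'm.aemeasurable
  have hm1 : ∀ s, Monotone fun e => g e s := fun s a b hab =>
    hgmono (Prod.mk_le_mk.mpr ⟨hab, le_rfl⟩)
  have hm2 : ∀ e, Monotone fun s => g e s := fun e a b hab =>
    hgmono (Prod.mk_le_mk.mpr ⟨le_rfl, hab⟩)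
  -- measurability of the composed test maps
  have hΨm : ∀ {ψ : ℝ → ℝ}, Monotone ψ →
      Measurable fun p : ℝ × ℝ => ENNReal.ofReal (ψ (g p.1 p.2)) :=
    fun {ψ} hψm => ENNReal.measurable_ofReal.comp (hψm.measurable.comp hgmeas)
  rcases hGoodE with hEtop | hstrE
  · -- infinite mean of E
    have hEtop' : ∫⁻ x, ENNReal.ofReal x ∂(μ.map E) = ⊤ := by
      rw [lintegral_law hEm ENNReal.measurable_ofReal]; exact hEtop
    by_cases hSconstQ : ∀ᵐ s ∂(μ.map S), ∀ q : ℚ, 0 ≤ (q : ℝ) → g q s = g 0 s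
    · -- sections a.e. constant in e
      have hSconst : ∀ᵐ s ∂(μ.map S), ∀ e : ℝ, 0 ≤ e → g e s = g 0 s := by
        filter_upwards [hSconstQ] with s hs e he
        obtain ⟨q, hq⟩ := exists_rat_gt e
        exact le_antisymm (le_of_le_of_eq ((hm1 s) hq.le) (hs q (le_trans he hq.le)))
          ((hm1 s) he)
      have hcollapse : ∀ {ψ : ℝ → ℝ}, Monotone ψ →
          ∫⁻ ω, ENNReal.ofReal (ψ (g (E ω) (S ω))) ∂μ =
            ∫⁻ s, ENNReal.ofReal (ψ (g 0 s)) ∂(μ.map S) := by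
        intro ψ hψm
        rw [show (fun ω => ENNReal.ofReal (ψ (g (E ω) (S ω)))) =
            fun ω => (fun p : ℝ × ℝ => ENNReal.ofReal (ψ (g p.1 p.2))) (E ω, S ω) from rfl,
          lintegral_indep' hEm hSm hI (hΨm hψm)]
        apply lintegral_congr_ae
        filter_upwards [hSconst] with s hs
        have : ∫⁻ e, ENNReal.ofReal (ψ (g e s)) ∂(μ.map E) =
            ∫⁻ _, ENNReal.ofReal (ψ (g 0 s)) ∂(μ.map E) := by
          apply lintegral_congr_ae
          filter_upwards [map_ae_nonneg hEm hEnn] with e he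
          rw [hs e he]
        rw [this, lintegral_const, measure_univ, mul_one]
      rcases hGoodS with hStop | hstrS
      · by_cases hg0const : ∀ s : ℝ, 0 ≤ s → g 0 s = g 0 0
        · right
          intro ψ hψm hψc hψnn
          have hLHS : ∫⁻ ω, ENNReal.ofReal (ψ (g (E ω) (S ω))) ∂μ =
              ENNReal.ofReal (ψ (g 0 0)) := by
            rw [hcollapse hψm]
            have : ∫⁻ s, ENNReal.ofReal (ψ (g 0 s)) ∂(μ.map S) =
                ∫⁻ _, ENNReal.ofReal (ψ (g 0 0)) ∂(μ.map S) := by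
              apply lintegral_congr_ae
              filter_upwards [map_ae_nonneg hSm hSnn] with s hs
              rw [hg0const s hs]
            rw [this, lintegral_const, measure_univ, mul_one]
          rw [hLHS]
          calc ENNReal.ofReal (ψ (g 0 0)) = ∫⁻ _, ENNReal.ofReal (ψ (g 0 0)) ∂μ := by
                rw [lintegral_const, measure_univ, mul_one]
            _ ≤ ∫⁻ ω, ENNReal.ofReal (ψ (g (E' ω) (S' ω))) ∂μ :=
                lintegral_mono fun ω => ENNReal.ofReal_le_ofReal
                  (hψm (hgmono (Prod.mk_le_mk.mpr ⟨hE'nn ω, hS'nn ω⟩)))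
        · left
          push_neg at hg0const
          obtain ⟨s₀, hs₀, hne⟩ := hg0const
          have hk : ∫⁻ ω, ENNReal.ofReal (g 0 (S ω)) ∂μ = ⊤ :=
            lint_top_of_nonconst hSm hStop (hm2 0) (hgcx2 0) hs₀ hne
          rw [← top_le_iff, ← hk]
          exact lintegral_mono fun ω => ENNReal.ofReal_le_ofReal
            (hgmono (Prod.mk_le_mk.mpr ⟨hEnn ω, le_rfl⟩))
      · -- ES strong
        right
        intro ψ hψm hψc hψnn
        rw [hcollapse hψm]
        have hto : ∫⁻ s, ENNReal.ofReal (ψ (g 0 s)) ∂(μ.map S) =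
            ∫⁻ ω, ENNReal.ofReal (ψ (g 0 (S ω))) ∂μ :=
          lintegral_law hSm (ENNReal.measurable_ofReal.comp
            (hψm.measurable.comp (hm2 0).measurable))
        rw [hto]
        calc ∫⁻ ω, ENNReal.ofReal (ψ (g 0 (S ω))) ∂μ
            ≤ ∫⁻ ω, ENNReal.ofReal (ψ (g 0 (S' ω))) ∂μ :=
              hstrS (fun s => ψ (g 0 s)) (hψm.comp (hm2 0))
                (cx_comp_mono hψm hψc (hgcx2 0)) (fun s => hψnn _)
          _ ≤ ∫⁻ ω, ENNReal.ofReal (ψ (g (E' ω) (S' ω))) ∂μ :=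
              lintegral_mono fun ω => ENNReal.ofReal_le_ofReal
                (hψm (hgmono (Prod.mk_le_mk.mpr ⟨hE'nn ω, le_rfl⟩)))
    · -- sections non-constant on a set of positive measure: infinite mean for g(E,S)
      left
      set Bad : Set ℝ := {s | ¬ ∀ q : ℚ, 0 ≤ (q : ℝ) → g q s = g 0 s} with hBadDef
      have hBadmeas : MeasurableSet Bad := by
        have : Bad = (⋂ q : ℚ, {s : ℝ | 0 ≤ (q : ℝ) → g q s = g 0 s})ᶜ := by
          ext s
          simp [hBadDef, mem_iInter, not_forall]
        rw [this]
        apply MeasurableSet.compl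
        apply MeasurableSet.iInter
        intro q
        rcases le_or_gt 0 (q : ℝ) with hq | hq
        · have : {s : ℝ | 0 ≤ (q : ℝ) → g q s = g 0 s} = {s : ℝ | g q s = g 0 s} := by
            ext s; simp [hq]
          rw [this]
          exact measurableSet_eq_fun (hm2 (q : ℝ)).measurable (hm2 0).measurable
        · have : {s : ℝ | 0 ≤ (q : ℝ) → g q s = g 0 s} = univ := by
            ext s; simp [not_le.mpr hq]
          rw [this]
          exact MeasurableSet.univ
      have hBadpos : μ.map S Bad ≠ 0 := by
        intro h0
        apply hSconstQ
        rw [ae_iff]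
        convert h0 using 2
      have htop : ∀ s ∈ Bad, ∫⁻ e, ENNReal.ofReal (g e s) ∂(μ.map E) = ⊤ := by
        intro s hs
        simp only [hBadDef, mem_setOf_eq, not_forall] at hs
        obtain ⟨q, hq, hne⟩ := hs
        exact lint_top_of_nonconst (μ := μ.map E) measurable_id hEtop'
          (hm1 s) (hgcx1 s) hq hne
      rw [show (fun ω => ENNReal.ofReal (g (E ω) (S ω))) =
          fun ω => (fun p : ℝ × ℝ => ENNReal.ofReal (g p.1 p.2)) (E ω, S ω) from rfl,
        lintegral_indep' hEm hSm hI (Ψ := fun p : ℝ × ℝ => ENNReal.ofReal (g p.1 p.2)) (ENNReal.measurable_ofReal.comp hgmeas), ← top_le_iff]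
      calc (⊤ : ℝ≥0∞) = ⊤ * (μ.map S) Bad := (ENNReal.top_mul hBadpos).symm
        _ = ∫⁻ _ in Bad, ⊤ ∂(μ.map S) := (setLIntegral_const _ _).symm
        _ ≤ ∫⁻ s in Bad, (∫⁻ e, ENNReal.ofReal (g e s) ∂(μ.map E)) ∂(μ.map S) := by
            apply lintegral_mono_ae
            filter_upwards [ae_restrict_mem hBadmeas] with s hs
            rw [htop s hs]
        _ ≤ ∫⁻ s, (∫⁻ e, ENNReal.ofReal (g e s) ∂(μ.map E)) ∂(μ.map S) :=
            setLIntegral_le_lintegral _ _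

  · rcases hGoodS with hStop | hstrS
    · -- S has infinite mean
      have hStop' : ∫⁻ x, ENNReal.ofReal x ∂(μ.map S) = ⊤ := by
        rw [lintegral_law hSm ENNReal.measurable_ofReal]; exact hStop
      by_cases hEconstQ : ∀ᵐ e ∂(μ.map E), ∀ q : ℚ, 0 ≤ (q : ℝ) → g e q = g e 0
      · have hEconst : ∀ᵐ e ∂(μ.map E), ∀ s : ℝ, 0 ≤ s → g e s = g e 0 := by
          filter_upwards [hEconstQ] with e he s hs
          obtain ⟨q, hq⟩ := exists_rat_gt s
          exact le_antisymm (le_of_le_of_eq ((hm2 e) hq.le) (he q (le_trans hs hq.le)))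
            ((hm2 e) hs)
        right
        intro ψ hψm hψc hψnn
        have hcollapse : ∫⁻ ω, ENNReal.ofReal (ψ (g (E ω) (S ω))) ∂μ =
            ∫⁻ e, ENNReal.ofReal (ψ (g e 0)) ∂(μ.map E) := by
          rw [show (fun ω => ENNReal.ofReal (ψ (g (E ω) (S ω)))) =
              fun ω => (fun p : ℝ × ℝ => ENNReal.ofReal (ψ (g p.1 p.2))) (E ω, S ω) from rfl,
            lintegral_indep hEm hSm hI (hΨm hψm)]
          apply lintegral_congr_ae
          filter_upwards [hEconst] with e he
          have : ∫⁻ s, ENNReal.ofReal (ψ (g e s)) ∂(μ.map S) =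
              ∫⁻ _, ENNReal.ofReal (ψ (g e 0)) ∂(μ.map S) := by
            apply lintegral_congr_ae
            filter_upwards [map_ae_nonneg hSm hSnn] with s hs
            rw [he s hs]
          rw [this, lintegral_const, measure_univ, mul_one]
        rw [hcollapse, lintegral_law hEm (show Measurable fun e : ℝ =>
          ENNReal.ofReal (ψ (g e 0)) from ENNReal.measurable_ofReal.comp
          (hψm.measurable.comp (hm1 0).measurable))]
        calc ∫⁻ ω, ENNReal.ofReal (ψ (g (E ω) 0)) ∂μ
            ≤ ∫⁻ ω, ENNReal.ofReal (ψ (g (E' ω) 0)) ∂μ :=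
              hstrE (fun e => ψ (g e 0)) (hψm.comp (hm1 0))
                (cx_comp_mono hψm hψc (hgcx1 0)) (fun e => hψnn _)
          _ ≤ ∫⁻ ω, ENNReal.ofReal (ψ (g (E' ω) (S' ω))) ∂μ :=
              lintegral_mono fun ω => ENNReal.ofReal_le_ofReal
                (hψm (hgmono (Prod.mk_le_mk.mpr ⟨le_rfl, hS'nn ω⟩)))
      · left
        set Bad : Set ℝ := {e | ¬ ∀ q : ℚ, 0 ≤ (q : ℝ) → g e q = g e 0} with hBadDef
        have hBadmeas : MeasurableSet Bad := by
          have : Bad = (⋂ q : ℚ, {e : ℝ | 0 ≤ (q : ℝ) → g e q = g e 0})ᶜ := by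
            ext e
            simp [hBadDef, mem_iInter, not_forall]
          rw [this]
          apply MeasurableSet.compl
          apply MeasurableSet.iInter
          intro q
          rcases le_or_gt 0 (q : ℝ) with hq | hq
          · have : {e : ℝ | 0 ≤ (q : ℝ) → g e q = g e 0} = {e : ℝ | g e q = g e 0} := by
              ext e; simp [hq]
            rw [this]
            exact measurableSet_eq_fun (hm1 (q : ℝ)).measurable (hm1 0).measurable
          · have : {e : ℝ | 0 ≤ (q : ℝ) → g e q = g e 0} = univ := by
              ext e; simp [not_le.mpr hq]
            rw [this]
            exact MeasurableSet.univ
        have hBadpos : μ.map E Bad ≠ 0 := by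
          intro h0
          apply hEconstQ
          rw [ae_iff]
          convert h0 using 2
        have htop : ∀ e ∈ Bad, ∫⁻ s, ENNReal.ofReal (g e s) ∂(μ.map S) = ⊤ := by
          intro e he
          simp only [hBadDef, mem_setOf_eq, not_forall] at he
          obtain ⟨q, hq, hne⟩ := he
          exact lint_top_of_nonconst (μ := μ.map S) measurable_id hStop'
            (hm2 e) (hgcx2 e) hq hne
        rw [show (fun ω => ENNReal.ofReal (g (E ω) (S ω))) =
            fun ω => (fun p : ℝ × ℝ => ENNReal.ofReal (g p.1 p.2)) (E ω, S ω) from rfl,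
          lintegral_indep hEm hSm hI (Ψ := fun p : ℝ × ℝ => ENNReal.ofReal (g p.1 p.2))
            (ENNReal.measurable_ofReal.comp hgmeas), ← top_le_iff]
        calc (⊤ : ℝ≥0∞) = ⊤ * (μ.map E) Bad := (ENNReal.top_mul hBadpos).symm
          _ = ∫⁻ _ in Bad, ⊤ ∂(μ.map E) := (setLIntegral_const _ _).symm
          _ ≤ ∫⁻ e in Bad, (∫⁻ s, ENNReal.ofReal (g e s) ∂(μ.map S)) ∂(μ.map E) := by
              apply lintegral_mono_ae
              filter_upwards [ae_restrict_mem hBadmeas] with e he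
              rw [htop e he]
          _ ≤ ∫⁻ e, (∫⁻ s, ENNReal.ofReal (g e s) ∂(μ.map S)) ∂(μ.map E) :=
              setLIntegral_le_lintegral _ _
    · -- strong/strong case
      right
      intro ψ hψm hψc hψnn
      set H : ℕ → ℝ → ℝ≥0∞ :=
        fun N s => ∫⁻ e, ENNReal.ofReal (ψ (g (min e (N : ℝ)) s)) ∂(μ.map E') with hHdef
      set Hfull : ℝ → ℝ≥0∞ :=
        fun s => ∫⁻ e, ENNReal.ofReal (ψ (g e s)) ∂(μ.map E') with hHfulldef
      have hminm : ∀ N : ℕ, Monotone fun e : ℝ => min e (N : ℝ) :=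
        fun N a b hab => min_le_min hab le_rfl
      have hsecm : ∀ (N : ℕ) (s : ℝ), Monotone fun e : ℝ => ψ (g (min e (N : ℝ)) s) :=
        fun N s => (hψm.comp ((hm1 s).comp (hminm N)))
      have hHfin : ∀ N s, H N s ≤ ENNReal.ofReal (ψ (g (N : ℝ) s)) := by
        intro N s
        calc H N s ≤ ∫⁻ _, ENNReal.ofReal (ψ (g (N : ℝ) s)) ∂(μ.map E') :=
              lintegral_mono fun e => ENNReal.ofReal_le_ofReal
                (hψm ((hm1 s) (min_le_right e (N : ℝ))))
          _ = ENNReal.ofReal (ψ (g (N : ℝ) s)) := by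
              rw [lintegral_const, measure_univ, mul_one]
      have hHne : ∀ N s, H N s ≠ ⊤ :=
        fun N s => (lt_of_le_of_lt (hHfin N s) ENNReal.ofReal_lt_top).ne
      set K : ℕ → ℝ → ℝ := fun N s => (H N s).toReal with hKdef
      have hKofReal : ∀ N s, ENNReal.ofReal (K N s) = H N s :=
        fun N s => ENNReal.ofReal_toReal (hHne N s)
      have hHm : ∀ N, Monotone (H N) := by
        intro N a b hab
        exact lintegral_mono fun e => ENNReal.ofReal_le_ofReal (hψm ((hm2 _) hab))
      have hKm : ∀ N, Monotone (K N) :=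
        fun N a b hab => ENNReal.toReal_mono (hHne N b) (hHm N hab)
      have hKnn : ∀ N s, 0 ≤ K N s := fun N s => ENNReal.toReal_nonneg
      have hKcx : ∀ N, ConvexOn ℝ univ (K N) := by
        intro N
        refine ⟨convex_univ, fun x _ y _ p q hp hq hpq => ?_⟩
        have hHcx : H N (p • x + q • y) ≤
            ENNReal.ofReal p * H N x + ENNReal.ofReal q * H N y := by
          calc H N (p • x + q • y)
              ≤ ∫⁻ e, (ENNReal.ofReal (p * ψ (g (min e (N : ℝ)) x)) +
                ENNReal.ofReal (q * ψ (g (min e (N : ℝ)) y))) ∂(μ.map E') := by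
                apply lintegral_mono
                intro e
                have hcx := (cx_comp_mono hψm hψc (hgcx2 (min e (N : ℝ)))).2
                  (mem_univ x) (mem_univ y) hp hq hpq
                simp only [smul_eq_mul] at hcx
                calc ENNReal.ofReal (ψ (g (min e (N : ℝ)) (p • x + q • y)))
                    ≤ ENNReal.ofReal (p * ψ (g (min e (N : ℝ)) x) +
                        q * ψ (g (min e (N : ℝ)) y)) := by
                      apply ENNReal.ofReal_le_ofReal
                      simpa [smul_eq_mul] using hcx
                  _ ≤ _ := ENNReal.ofReal_add_le
            _ = ∫⁻ e, ENNReal.ofReal (p * ψ (g (min e (N : ℝ)) x)) ∂(μ.map E') +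
                ∫⁻ e, ENNReal.ofReal (q * ψ (g (min e (N : ℝ)) y)) ∂(μ.map E') :=
                lintegral_add_left
                  (show Measurable fun e : ℝ =>
                      ENNReal.ofReal (p * ψ (g (min e (N : ℝ)) x)) from
                    ENNReal.measurable_ofReal.comp
                    ((hsecm N x).measurable.const_mul p)) _
            _ = ENNReal.ofReal p * H N x + ENNReal.ofReal q * H N y := by
                congr 1
                · rw [← lintegral_const_mul _
                    (show Measurable fun e : ℝ =>
                        ENNReal.ofReal (ψ (g (min e (N : ℝ)) x)) from
                      ENNReal.measurable_ofReal.comp (hsecm N x).measurable)]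
                  exact lintegral_congr fun e => ENNReal.ofReal_mul hp
                · rw [← lintegral_const_mul _
                    (show Measurable fun e : ℝ =>
                        ENNReal.ofReal (ψ (g (min e (N : ℝ)) y)) from
                      ENNReal.measurable_ofReal.comp (hsecm N y).measurable)]
                  exact lintegral_congr fun e => ENNReal.ofReal_mul hq
        have hfin : ENNReal.ofReal p * H N x + ENNReal.ofReal q * H N y ≠ ⊤ :=
          ENNReal.add_ne_top.mpr ⟨ENNReal.mul_ne_top ENNReal.ofReal_ne_top (hHne N x),
            ENNReal.mul_ne_top ENNReal.ofReal_ne_top (hHne N y)⟩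
        have := ENNReal.toReal_mono hfin hHcx
        rw [ENNReal.toReal_add (ENNReal.mul_ne_top ENNReal.ofReal_ne_top (hHne N x))
          (ENNReal.mul_ne_top ENNReal.ofReal_ne_top (hHne N y)),
          ENNReal.toReal_mul, ENNReal.toReal_mul,
          ENNReal.toReal_ofReal hp, ENNReal.toReal_ofReal hq] at this
        simpa [hKdef, smul_eq_mul] using this
      have hsup_e : ∀ (s e : ℝ),
          (⨆ N : ℕ, ENNReal.ofReal (ψ (g (min e (N : ℝ)) s))) =
            ENNReal.ofReal (ψ (g e s)) := by
        intro s e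
        apply le_antisymm
        · exact iSup_le fun N => ENNReal.ofReal_le_ofReal
            (hψm ((hm1 s) (min_le_left e (N : ℝ))))
        · obtain ⟨N, hN⟩ := exists_nat_ge e
          exact le_iSup_of_le N (le_of_eq (by rw [min_eq_left hN]))
      have hmonoN : ∀ (s e : ℝ), Monotone fun N : ℕ =>
          ENNReal.ofReal (ψ (g (min e (N : ℝ)) s)) := by
        intro s e N M hNM
        exact ENNReal.ofReal_le_ofReal (hψm ((hm1 s)
          (min_le_min le_rfl (by exact_mod_cast hNM))))
      have hHsup : ∀ s, (⨆ N, H N s) = Hfull s := by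
        intro s
        calc (⨆ N, H N s)
            = ∫⁻ e, ⨆ N : ℕ, ENNReal.ofReal (ψ (g (min e (N : ℝ)) s)) ∂(μ.map E') :=
              (lintegral_iSup
                (fun N => ENNReal.measurable_ofReal.comp (hsecm N s).measurable)
                (fun N M hNM e => hmonoN s e hNM)).symm
          _ = Hfull s := lintegral_congr fun e => hsup_e s e
      have hHmeas : ∀ N, Measurable (H N) := by
        intro N
        have : H N = fun s => ENNReal.ofReal (K N s) := funext fun s => (hKofReal N s).symm
        rw [this]
        exact ENNReal.measurable_ofReal.comp (hKm N).measurable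
      have hHmonoN : ∀ (s : ℝ), Monotone fun N => H N s :=
        fun s N M hNM => lintegral_mono fun e => hmonoN s e hNM
      -- main chain
      calc ∫⁻ ω, ENNReal.ofReal (ψ (g (E ω) (S ω))) ∂μ
          = ∫⁻ s, (∫⁻ e, ENNReal.ofReal (ψ (g e s)) ∂(μ.map E)) ∂(μ.map S) :=
            lintegral_indep' hEm hSm hI (hΨm hψm)
        _ ≤ ∫⁻ s, Hfull s ∂(μ.map S) := by
            apply lintegral_mono
            intro s
            show ∫⁻ e, ENNReal.ofReal (ψ (g e s)) ∂(μ.map E) ≤ Hfull s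
            have hfs : Hfull s = ∫⁻ e, ENNReal.ofReal (ψ (g e s)) ∂(μ.map E') := rfl
            rw [hfs]
            rw [lintegral_law hEm (show Measurable fun e : ℝ =>
                  ENNReal.ofReal (ψ (g e s)) from ENNReal.measurable_ofReal.comp
                  (hψm.measurable.comp (hm1 s).measurable)),
              lintegral_law hE'm (show Measurable fun e : ℝ =>
                  ENNReal.ofReal (ψ (g e s)) from ENNReal.measurable_ofReal.comp
                  (hψm.measurable.comp (hm1 s).measurable))]
            exact hstrE (fun e => ψ (g e s)) (hψm.comp (hm1 s))
              (cx_comp_mono hψm hψc (hgcx1 s)) (fun e => hψnn _)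
        _ = ⨆ N, ∫⁻ s, H N s ∂(μ.map S) := by
            rw [← lintegral_iSup hHmeas (fun N M hNM s => hHmonoN s hNM)]
            exact lintegral_congr fun s => (hHsup s).symm
        _ ≤ ⨆ N, ∫⁻ s, H N s ∂(μ.map S') := by
            apply iSup_mono
            intro N
            have e1 : ∫⁻ s, H N s ∂(μ.map S) = ∫⁻ ω, ENNReal.ofReal (K N (S ω)) ∂μ := by
              rw [← lintegral_law hSm (show Measurable fun s : ℝ =>
                ENNReal.ofReal (K N s) from
                ENNReal.measurable_ofReal.comp (hKm N).measurable)]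
              exact lintegral_congr fun s => (hKofReal N s).symm
            have e2 : ∫⁻ s, H N s ∂(μ.map S') = ∫⁻ ω, ENNReal.ofReal (K N (S' ω)) ∂μ := by
              rw [← lintegral_law hS'm (show Measurable fun s : ℝ =>
                ENNReal.ofReal (K N s) from
                ENNReal.measurable_ofReal.comp (hKm N).measurable)]
              exact lintegral_congr fun s => (hKofReal N s).symm
            rw [e1, e2]
            exact hstrS (K N) (hKm N) (hKcx N) (hKnn N)
        _ ≤ ∫⁻ s, Hfull s ∂(μ.map S') := by
            apply iSup_le
            intro N
            apply lintegral_mono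
            intro s
            rw [← hHsup s]
            exact le_iSup (fun N => H N s) N
        _ = ∫⁻ ω, ENNReal.ofReal (ψ (g (E' ω) (S' ω))) ∂μ :=
            (lintegral_indep' hE'm hS'm hI' (hΨm hψm)).symm


end GoodStep2

section Convert

variable {Ω : Type*} [MeasurableSpace Ω] {μ : Measure Ω} [IsProbabilityMeasure μ]

lemma repr_fin {Z : Ω → ℝ} (hZnn : ∀ ω, 0 ≤ Z ω) {φ : ℝ → ℝ}
    (hIZ : Integrable (φ ∘ Z) μ) :
    ∫⁻ ω, ENNReal.ofReal (φ (max (Z ω) 0) - φ 0) ∂μ ≠ ⊤ := by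
  have hsub : Integrable (fun ω => φ (Z ω) - φ 0) μ := hIZ.sub (integrable_const _)
  have hb := hsub.2
  rw [hasFiniteIntegral_iff_norm] at hb
  apply ne_top_of_le_ne_top hb.ne
  apply lintegral_mono
  intro ω
  show ENNReal.ofReal (φ (max (Z ω) 0) - φ 0) ≤ ENNReal.ofReal ‖φ (Z ω) - φ 0‖
  rw [max_eq_left (hZnn ω), Real.norm_eq_abs]
  exact ENNReal.ofReal_le_ofReal (le_abs_self _)

lemma integral_repr {Z : Ω → ℝ} (hZnn : ∀ ω, 0 ≤ Z ω) {φ : ℝ → ℝ} (hφ : Monotone φ)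
    (hIZ : Integrable (φ ∘ Z) μ) :
    ∫ ω, φ (Z ω) ∂μ = φ 0 + (∫⁻ ω, ENNReal.ofReal (φ (max (Z ω) 0) - φ 0) ∂μ).toReal := by
  have hsub : Integrable (fun ω => φ (Z ω) - φ 0) μ := hIZ.sub (integrable_const _)
  have h1 : ∫ ω, φ (Z ω) ∂μ = ∫ ω, (φ (Z ω) - φ 0) ∂μ + φ 0 := by
    have : Integrable (fun ω => φ (Z ω)) μ := hIZ
    rw [integral_sub this (integrable_const _), integral_const, probReal_univ]
    simp
  rw [h1]
  have h2 : ∫ ω, (φ (Z ω) - φ 0) ∂μ =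
      (∫⁻ ω, ENNReal.ofReal (φ (Z ω) - φ 0) ∂μ).toReal := by
    rw [integral_eq_lintegral_of_nonneg_ae
      (ae_of_all _ fun ω => sub_nonneg.mpr (hφ (hZnn ω))) hsub.aestronglyMeasurable]
  have h3 : ∫⁻ ω, ENNReal.ofReal (φ (Z ω) - φ 0) ∂μ =
      ∫⁻ ω, ENNReal.ofReal (φ (max (Z ω) 0) - φ 0) ∂μ :=
    lintegral_congr fun ω => by rw [max_eq_left (hZnn ω)]
  rw [h2, h3]
  ring

lemma leSt_of_stSt {X Y : Ω → ℝ} (hXnn : ∀ ω, 0 ≤ X ω) (hYnn : ∀ ω, 0 ≤ Y ω)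
    (h : StSt μ X Y) : LeSt μ X Y := by
  intro φ hφ hIX hIY
  rw [integral_repr hXnn hφ hIX, integral_repr hYnn hφ hIY]
  apply add_le_add_right
  apply ENNReal.toReal_mono (repr_fin hYnn hIY)
  exact h (fun x => ENNReal.ofReal (φ (max x 0) - φ 0))
    (fun a b hab => ENNReal.ofReal_le_ofReal (by
      have := hφ (max_le_max hab (le_refl (0:ℝ)))
      linarith))

lemma leIcx_of_good {X Y : Ω → ℝ} (hXm : Measurable X) (hXnn : ∀ ω, 0 ≤ X ω)
    (hYnn : ∀ ω, 0 ≤ Y ω) (h : Good μ X Y) : LeIcx μ X Y := by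
  intro φ hφ hφc hIX hIY
  by_cases hconst : ∀ x : ℝ, 0 ≤ x → φ x = φ 0
  · apply le_of_eq
    calc ∫ ω, φ (X ω) ∂μ = ∫ _, φ 0 ∂μ :=
          integral_congr_ae (ae_of_all _ fun ω => hconst _ (hXnn ω))
      _ = ∫ ω, φ (Y ω) ∂μ :=
          (integral_congr_ae (ae_of_all _ fun ω => hconst _ (hYnn ω))).symm
  · push_neg at hconst
    obtain ⟨x₀, hx₀, hne⟩ := hconst
    rcases h with htop | hstr
    · exfalso
      obtain ⟨a, ha, hlin⟩ := nonconst_lin hφ hφc hx₀ hne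
      have htop2 : ∫⁻ ω, ENNReal.ofReal (φ (X ω) - φ 0) ∂μ = ⊤ :=
        lint_top_mono (k := fun x => φ x - φ 0) hXm htop ha
          (fun y hy => by have := hlin y hy; show a * y ≤ φ y - φ 0; linarith)
      have hfin := repr_fin hXnn hIX
      have heq : ∫⁻ ω, ENNReal.ofReal (φ (max (X ω) 0) - φ 0) ∂μ =
          ∫⁻ ω, ENNReal.ofReal (φ (X ω) - φ 0) ∂μ :=
        lintegral_congr fun ω => by rw [max_eq_left (hXnn ω)]
      rw [heq] at hfin
      exact hfin htop2
    · rw [integral_repr hXnn hφ hIX, integral_repr hYnn hφ hIY]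
      apply add_le_add_right
      apply ENNReal.toReal_mono (repr_fin hYnn hIY)
      have hψm : Monotone fun x : ℝ => φ (max x 0) - φ 0 := fun a b hab =>
        sub_le_sub_right (hφ (max_le_max hab le_rfl)) _
      have hψnn : ∀ x : ℝ, 0 ≤ φ (max x 0) - φ 0 := fun x =>
        sub_nonneg.mpr (hφ (le_max_right x 0))
      have hcxmax : ConvexOn ℝ univ fun x : ℝ => φ (max x 0) :=
        cx_posext (hφ.monotoneOn _) (hφc.subset (subset_univ _) (convex_Ici 0))
      have hψc : ConvexOn ℝ univ fun x : ℝ => φ (max x 0) - φ 0 := by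
        refine ⟨convex_univ, fun x _ y _ p q hp hq hpq => ?_⟩
        have h2 := hcxmax.2 (mem_univ x) (mem_univ y) hp hq hpq
        have h3 : p * φ 0 + q * φ 0 = φ 0 := by rw [← add_mul, hpq, one_mul]
        simp only [smul_eq_mul] at *
        linarith
      exact hstr _ hψm hψc hψnn

end Convert

section IndepPlumb

variable {Ω : Type*} [MeasurableSpace Ω] {μ : Measure Ω} [IsProbabilityMeasure μ]

noncomputable def psiSeq (f : ℝ → ℝ → ℝ) : ℕ → (ℕ → ℝ) → ℝ
  | 0 => fun u => (u 0) ^ 2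
  | (n + 1) => fun u => f (max ((u (n + 1)) ^ 2) 0) (max (psiSeq f n u) 0)

lemma psiSeq_meas {f : ℝ → ℝ → ℝ}
    (hf : Measurable fun p : ℝ × ℝ => f (max p.1 0) (max p.2 0)) :
    ∀ n, Measurable (psiSeq f n) := by
  intro n
  induction n with
  | zero => exact (measurable_pi_apply 0).pow_const 2
  | succ n ih =>
      have : psiSeq f (n + 1) = (fun p : ℝ × ℝ => f (max p.1 0) (max p.2 0)) ∘
          (fun u : ℕ → ℝ => ((u (n + 1)) ^ 2, psiSeq f n u)) := rfl
      rw [this]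
      exact hf.comp (((measurable_pi_apply (n + 1)).pow_const 2).prodMk ih)

lemma psiSeq_congr {f : ℝ → ℝ → ℝ} :
    ∀ (n : ℕ) {u v : ℕ → ℝ}, (∀ i, i ≤ n → u i = v i) → psiSeq f n u = psiSeq f n v := by
  intro n
  induction n with
  | zero =>
      intro u v h
      show (u 0) ^ 2 = (v 0) ^ 2
      rw [h 0 le_rfl]
  | succ n ih =>
      intro u v h
      show f (max ((u (n + 1)) ^ 2) 0) (max (psiSeq f n u) 0) =
        f (max ((v (n + 1)) ^ 2) 0) (max (psiSeq f n v) 0)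
      rw [h (n + 1) le_rfl, ih fun i hi => h i (hi.trans (Nat.le_succ n))]

lemma indep_comp {Y : ℕ → Ω → ℝ} (hY : ∀ i, Measurable (Y i))
    (hind : iIndepFun (m := fun _ : ℕ => Real.measurableSpace) Y μ)
    {f : ℝ → ℝ → ℝ} (hf : Measurable fun p : ℝ × ℝ => f (max p.1 0) (max p.2 0)) (n : ℕ) :
    IndepFun (fun ω => psiSeq f n (fun i => Y i ω)) (fun ω => (Y (n + 1) ω) ^ 2) μ := by
  have hdis : Disjoint (Finset.range (n + 1)) ({n + 1} : Finset ℕ) := by simp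
  have hbase := hind.indepFun_finset (Finset.range (n + 1)) {n + 1} hdis hY
  set ext : ((i : (Finset.range (n + 1) : Finset ℕ)) → ℝ) → (ℕ → ℝ) :=
    fun v i => if h : i ∈ Finset.range (n + 1) then v ⟨i, h⟩ else 0 with hextdef
  have hextm : Measurable ext := by
    apply measurable_pi_lambda
    intro i
    by_cases h : i ∈ Finset.range (n + 1)
    · simp only [hextdef, dif_pos h]
      exact measurable_pi_apply _
    · simp only [hextdef, dif_neg h]
      exact measurable_const
  have hleft : (fun ω => psiSeq f n (fun i => Y i ω)) =
      (fun v => psiSeq f n (ext v)) ∘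
        (fun ω (i : (Finset.range (n + 1) : Finset ℕ)) => Y i ω) := by
    funext ω
    apply psiSeq_congr
    intro i hi
    have hmem : i ∈ Finset.range (n + 1) := Finset.mem_range.mpr (Nat.lt_succ_of_le hi)
    simp only [Function.comp_apply, hextdef, dif_pos hmem]
  have hright : (fun ω => (Y (n + 1) ω) ^ 2) =
      (fun w : (i : ({n + 1} : Finset ℕ)) → ℝ =>
          (w ⟨n + 1, Finset.mem_singleton_self _⟩) ^ 2) ∘
        (fun ω (i : ({n + 1} : Finset ℕ)) => Y i ω) := rfl
  rw [hleft, hright]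
  exact hbase.comp ((psiSeq_meas hf n).comp hextm)
    ((measurable_pi_apply _).pow_const 2)

lemma indep_eps_sigma {σ : ℕ → Ω → ℝ} {ε : ℕ → Ω → ℝ} {f : ℝ → ℝ → ℝ}
    (hσmeas : ∀ n, Measurable (σ n)) (hεmeas : ∀ n, Measurable (ε n))
    (hrec : ∀ n ω, (σ (n + 1) ω) ^ 2 = f ((ε n ω) ^ 2) ((σ n ω) ^ 2))
    (hindep : iIndepFun (m := fun _ : ℕ => Real.measurableSpace)
      (fun i => Nat.rec (σ 0) (fun n _ => ε n) i) μ)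
    (hf : Measurable fun p : ℝ × ℝ => f (max p.1 0) (max p.2 0)) (n : ℕ) :
    IndepFun (fun ω => (ε n ω) ^ 2) (fun ω => (σ n ω) ^ 2) μ := by
  set Y : ℕ → Ω → ℝ := fun i => Nat.rec (σ 0) (fun k _ => ε k) i with hYdef
  have hYmeas : ∀ i, Measurable (Y i) := by
    intro i
    cases i with
    | zero => exact hσmeas 0
    | succ k => exact hεmeas k
  have hval : ∀ (m : ℕ) (ω : Ω), (σ m ω) ^ 2 = psiSeq f m (fun i => Y i ω) := by
    intro m
    induction m with
    | zero => intro ω; rfl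
    | succ m ih =>
        intro ω
        show (σ (m + 1) ω) ^ 2 =
          f (max ((Y (m + 1) ω) ^ 2) 0) (max (psiSeq f m (fun i => Y i ω)) 0)
        rw [← ih ω]
        show (σ (m + 1) ω) ^ 2 = f (max ((ε m ω) ^ 2) 0) (max ((σ m ω) ^ 2) 0)
        rw [max_eq_left (sq_nonneg _), max_eq_left (sq_nonneg _)]
        exact hrec m ω
  have h := (indep_comp hYmeas hindep hf n).symm
  have he : (fun ω => (Y (n + 1) ω) ^ 2) = fun ω => (ε n ω) ^ 2 := rfl
  have hs : (fun ω => psiSeq f n (fun i => Y i ω)) = fun ω => (σ n ω) ^ 2 :=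
    funext fun ω => (hval n ω).symm
  rw [he, hs] at h
  exact h

end IndepPlumb

end Stmt3Aux

open Stmt3Aux in
theorem stmt3 {Ω : Type*} [MeasurableSpace Ω] (μ : Measure Ω) [IsProbabilityMeasure μ]
    (f : ℝ → ℝ → ℝ)
    (hf_mono : MonotoneOn (fun p : ℝ × ℝ => f p.1 p.2) (Ici 0 ×ˢ Ici 0))
    (hf_cx1 : ∀ y ∈ Ici (0:ℝ), ConvexOn ℝ (Ici (0:ℝ)) (fun x => f x y))
    (hf_cx2 : ∀ x ∈ Ici (0:ℝ), ConvexOn ℝ (Ici (0:ℝ)) (fun y => f x y))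
    (σ σ' : ℕ → Ω → ℝ) (ε ε' : ℕ → Ω → ℝ) (X X' : ℕ → Ω → ℝ)
    (hσmeas : ∀ n, Measurable (σ n)) (hσ'meas : ∀ n, Measurable (σ' n))
    (hεmeas : ∀ n, Measurable (ε n)) (hε'meas : ∀ n, Measurable (ε' n))
    (hσnn : ∀ n ω, 0 ≤ σ n ω) (hσ'nn : ∀ n ω, 0 ≤ σ' n ω)
    (hX : ∀ n ω, X n ω = σ n ω * ε n ω) (hX' : ∀ n ω, X' n ω = σ' n ω * ε' n ω)
    (hEε : ∀ n, ∫ ω, ε n ω ∂μ = 0) (hEε' : ∀ n, ∫ ω, ε' n ω ∂μ = 0)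
    (hrec : ∀ n ω, (σ (n + 1) ω) ^ 2 = f ((ε n ω) ^ 2) ((σ n ω) ^ 2))
    (hrec' : ∀ n ω, (σ' (n + 1) ω) ^ 2 = f ((ε' n ω) ^ 2) ((σ' n ω) ^ 2))
    -- independence of (σ₀, ε₀, ε₁, …) and of (σ̃₀, ε̃₀, ε̃₁, …):
    (hindep : iIndepFun (m := fun _ : ℕ => Real.measurableSpace)
      (fun i => Nat.rec (σ 0) (fun n _ => ε n) i) μ)
    (hindep' : iIndepFun (m := fun _ : ℕ => Real.measurableSpace)
      (fun i => Nat.rec (σ' 0) (fun n _ => ε' n) i) μ)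
    (n : ℕ) :
    ((∀ k, LeSt μ (fun ω => (ε k ω) ^ 2) (fun ω => (ε' k ω) ^ 2)) →
        LeSt μ (fun ω => (σ 0 ω) ^ 2) (fun ω => (σ' 0 ω) ^ 2) →
        LeSt μ (fun ω => (X n ω) ^ 2) (fun ω => (X' n ω) ^ 2)) ∧
      ((∀ k, LeIcx μ (fun ω => (ε k ω) ^ 2) (fun ω => (ε' k ω) ^ 2)) →
        LeIcx μ (fun ω => (σ 0 ω) ^ 2) (fun ω => (σ' 0 ω) ^ 2) →
        LeIcx μ (fun ω => (X n ω) ^ 2) (fun ω => (X' n ω) ^ 2)) := by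
  classical
  have hfhat : Measurable fun p : ℝ × ℝ => f (max p.1 0) (max p.2 0) :=
    meas_posext2 hf_mono hf_cx2
  have hfmono : Monotone fun p : ℝ × ℝ => f (max p.1 0) (max p.2 0) := by
    intro p q hpq
    exact hf_mono (Set.mk_mem_prod (le_max_right p.1 0) (le_max_right p.2 0))
      (Set.mk_mem_prod (le_max_right q.1 0) (le_max_right q.2 0))
      ⟨max_le_max hpq.1 le_rfl, max_le_max hpq.2 le_rfl⟩
  have hfcx1 : ∀ s : ℝ, ConvexOn ℝ Set.univ fun e => f (max e 0) (max s 0) := by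
    intro s
    apply cx_posext (k := fun e => f e (max s 0))
    · intro a ha b hb hab
      exact hf_mono (Set.mk_mem_prod ha (le_max_right s 0))
        (Set.mk_mem_prod hb (le_max_right s 0)) ⟨hab, le_rfl⟩
    · exact hf_cx1 _ (le_max_right s 0)
  have hfcx2 : ∀ e : ℝ, ConvexOn ℝ Set.univ fun s => f (max e 0) (max s 0) := by
    intro e
    apply cx_posext (k := fun s => f (max e 0) s)
    · intro a ha b hb hab
      exact hf_mono (Set.mk_mem_prod (le_max_right e 0) ha)
        (Set.mk_mem_prod (le_max_right e 0) hb) ⟨le_rfl, hab⟩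
    · exact hf_cx2 _ (le_max_right e 0)
  have hsq : ∀ (Z : Ω → ℝ), Measurable Z → Measurable fun ω => (Z ω) ^ 2 :=
    fun Z hZ => hZ.pow_const 2
  have hgmulmeas : Measurable fun p : ℝ × ℝ => max p.1 0 * max p.2 0 :=
    (measurable_fst.max measurable_const).mul (measurable_snd.max measurable_const)
  have hgmulmono : Monotone fun p : ℝ × ℝ => max p.1 0 * max p.2 0 := by
    intro p q hpq
    exact mul_le_mul (max_le_max hpq.1 le_rfl) (max_le_max hpq.2 le_rfl)
      (le_max_right _ _) (le_trans (le_max_right _ _) (max_le_max hpq.1 le_rfl))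
  have hgmulcx1 : ∀ s : ℝ, ConvexOn ℝ Set.univ fun e => max e 0 * max s 0 := by
    intro s
    apply cx_posext (k := fun e => e * max s 0)
    · intro a _ b _ hab
      exact mul_le_mul_of_nonneg_right hab (le_max_right s 0)
    · exact ⟨convex_Ici 0, fun x _ y _ p q hp hq hpq =>
        le_of_eq (by simp only [smul_eq_mul]; ring)⟩
  have hgmulcx2 : ∀ e : ℝ, ConvexOn ℝ Set.univ fun s => max e 0 * max s 0 := by
    intro e
    apply cx_posext (k := fun s => max e 0 * s)
    · intro a _ b _ hab
      exact mul_le_mul_of_nonneg_left hab (le_max_right e 0)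
    · exact ⟨convex_Ici 0, fun x _ y _ p q hp hq hpq =>
        le_of_eq (by simp only [smul_eq_mul]; ring)⟩
  have hIf : ∀ m, IndepFun (fun ω => (ε m ω) ^ 2) (fun ω => (σ m ω) ^ 2) μ :=
    indep_eps_sigma hσmeas hεmeas hrec hindep hfhat
  have hIf' : ∀ m, IndepFun (fun ω => (ε' m ω) ^ 2) (fun ω => (σ' m ω) ^ 2) μ :=
    indep_eps_sigma hσ'meas hε'meas hrec' hindep' hfhat
  have hrw : ∀ m, (fun ω => f (max ((ε m ω) ^ 2) 0) (max ((σ m ω) ^ 2) 0)) =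
      fun ω => (σ (m + 1) ω) ^ 2 := fun m => funext fun ω => by
    rw [max_eq_left (sq_nonneg _), max_eq_left (sq_nonneg _)]
    exact (hrec m ω).symm
  have hrw' : ∀ m, (fun ω => f (max ((ε' m ω) ^ 2) 0) (max ((σ' m ω) ^ 2) 0)) =
      fun ω => (σ' (m + 1) ω) ^ 2 := fun m => funext fun ω => by
    rw [max_eq_left (sq_nonneg _), max_eq_left (sq_nonneg _)]
    exact (hrec' m ω).symm
  have hXrw : (fun ω => max ((ε n ω) ^ 2) 0 * max ((σ n ω) ^ 2) 0) =
      fun ω => (X n ω) ^ 2 := funext fun ω => by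
    rw [max_eq_left (sq_nonneg _), max_eq_left (sq_nonneg _), hX n ω]
    ring
  have hXrw' : (fun ω => max ((ε' n ω) ^ 2) 0 * max ((σ' n ω) ^ 2) 0) =
      fun ω => (X' n ω) ^ 2 := funext fun ω => by
    rw [max_eq_left (sq_nonneg _), max_eq_left (sq_nonneg _), hX' n ω]
    ring
  constructor
  · -- stochastic order part
    intro hε0 hσ0
    have hstep : ∀ m, StSt μ (fun ω => (σ m ω) ^ 2) (fun ω => (σ' m ω) ^ 2) := by
      intro m
      induction m with
      | zero => exact stSt_of_leSt (hsq _ (hσmeas 0)) (hsq _ (hσ'meas 0)) hσ0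
      | succ m ih =>
          have h := stSt_step (μ := μ) (g := fun a b => f (max a 0) (max b 0))
            (hsq _ (hεmeas m)) (hsq _ (hσmeas m)) (hsq _ (hε'meas m)) (hsq _ (hσ'meas m))
            (hIf m) (hIf' m) hfhat hfmono
            (stSt_of_leSt (hsq _ (hεmeas m)) (hsq _ (hε'meas m)) (hε0 m)) ih
          rw [← hrw m, ← hrw' m]
          exact h
    have hfin := stSt_step (μ := μ) (g := fun a b => max a 0 * max b 0)
      (hsq _ (hεmeas n)) (hsq _ (hσmeas n)) (hsq _ (hε'meas n)) (hsq _ (hσ'meas n))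
      (hIf n) (hIf' n) hgmulmeas hgmulmono
      (stSt_of_leSt (hsq _ (hεmeas n)) (hsq _ (hε'meas n)) (hε0 n)) (hstep n)
    have h2 : StSt μ (fun ω => (X n ω) ^ 2) (fun ω => (X' n ω) ^ 2) := by
      rw [← hXrw, ← hXrw']
      exact hfin
    exact leSt_of_stSt (fun ω => sq_nonneg _) (fun ω => sq_nonneg _) h2
  · -- increasing convex order part
    intro hε0 hσ0
    have hstep : ∀ m, Good μ (fun ω => (σ m ω) ^ 2) (fun ω => (σ' m ω) ^ 2) := by
      intro m
      induction m with
      | zero =>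
          exact good_of_leIcx (hsq _ (hσmeas 0)) (hsq _ (hσ'meas 0))
            (fun ω => sq_nonneg _) (fun ω => sq_nonneg _) hσ0
      | succ m ih =>
          have h := good_step (μ := μ) (g := fun a b => f (max a 0) (max b 0))
            (hsq _ (hεmeas m)) (hsq _ (hσmeas m)) (hsq _ (hε'meas m)) (hsq _ (hσ'meas m))
            (fun ω => sq_nonneg _) (fun ω => sq_nonneg _)
            (fun ω => sq_nonneg _) (fun ω => sq_nonneg _)
            (hIf m) (hIf' m) hfhat hfmono hfcx1 hfcx2
            (good_of_leIcx (hsq _ (hεmeas m)) (hsq _ (hε'meas m))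
              (fun ω => sq_nonneg _) (fun ω => sq_nonneg _) (hε0 m)) ih
          rw [← hrw m, ← hrw' m]
          exact h
    have hfin := good_step (μ := μ) (g := fun a b => max a 0 * max b 0)
      (hsq _ (hεmeas n)) (hsq _ (hσmeas n)) (hsq _ (hε'meas n)) (hsq _ (hσ'meas n))
      (fun ω => sq_nonneg _) (fun ω => sq_nonneg _)
      (fun ω => sq_nonneg _) (fun ω => sq_nonneg _)
      (hIf n) (hIf' n) hgmulmeas hgmulmono hgmulcx1 hgmulcx2
      (good_of_leIcx (hsq _ (hεmeas n)) (hsq _ (hε'meas n))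
        (fun ω => sq_nonneg _) (fun ω => sq_nonneg _) (hε0 n)) (hstep n)
    have h2 : Good μ (fun ω => (X n ω) ^ 2) (fun ω => (X' n ω) ^ 2) := by
      rw [← hXrw, ← hXrw']
      exact hfin
    have hXm : Measurable fun ω => (X n ω) ^ 2 := by
      have : (fun ω => (X n ω) ^ 2) = fun ω => (σ n ω * ε n ω) ^ 2 :=
        funext fun ω => by rw [hX n ω]
      rw [this]
      exact ((hσmeas n).mul (hεmeas n)).pow_const 2
    exact leIcx_of_good hXm (fun ω => sq_nonneg _) (fun ω => sq_nonneg _) h2
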